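/- Let T : ℤ³ → ℝ be nonzero at every point with μ(i,j,k) ≥ 0 and satisfy the octahedron relation at every (i,j,k) with μ(i,j,k+1) ≥ 2t. Assume that for every (i,j,k) in the initial-data band one has T(i+2, j−2, k) = T(i,j,k) and T(i+2t, j, k−2r) = T(i,j,k) (note that these translations preserve μ, hence preserve the band). Then for all (i,j,k) with μ(i,j,k) ≥ 0: T(i+2, j−2, k) = T(i,j,k), and T(i+2t, j, k) = T(i, j, k+2r). -/
import Mathlib

private lemma Tsystem_auxA
    (r t : ℤ) (hr0 : 0 ≤ r) (hrt : r < t)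
    (T : ℤ → ℤ → ℤ → ℝ)
    (hT0 : ∀ i j k : ℤ, 0 ≤ r * i + r * j + t * k → T i j k ≠ 0)
    (hT : ∀ i j k : ℤ, 2 * t ≤ r * i + r * j + t * (k + 1) →
      T i j (k + 1) * T i j (k - 1)
        = T (i + 1) j k * T (i - 1) j k + T i (j + 1) k * T i (j - 1) k)
    (hper1 : ∀ i j k : ℤ, 0 ≤ r * i + r * j + t * k → r * i + r * j + t * k < 2 * t →
      T (i + 2) (j - 2) k = T i j k) :
    ∀ n : ℕ, ∀ i j k : ℤ, r * i + r * j + t * k = (n : ℤ) →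
      T (i + 2) (j - 2) k = T i j k := by
  intro n
  induction n using Nat.strong_induction_on with
  | _ n ih =>
    intro i j k hμ
    by_cases hband : (n : ℤ) < 2 * t
    · exact hper1 i j k (by rw [hμ]; exact Int.natCast_nonneg n) (by rw [hμ]; exact hband)
    · push_neg at hband
      have ihZ : ∀ m : ℤ, 0 ≤ m → m < (n : ℤ) → ∀ a b c : ℤ,
          r * a + r * b + t * c = m → T (a + 2) (b - 2) c = T a b c := by
        intro m hm0 hmn a b c h
        exact ih m.toNat (by omega) a b c (by rw [Int.toNat_of_nonneg hm0]; exact h)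
      have hA1 : T (i + 2 + 1) (j - 2) (k - 1) = T (i + 1) j (k - 1) := by
        have h := ihZ ((n : ℤ) + r - t) (by omega) (by omega) (i + 1) j (k - 1)
          (by linear_combination hμ)
        rwa [show i + 1 + 2 = i + 2 + 1 from by ring] at h
      have hA2 : T (i + 2 - 1) (j - 2) (k - 1) = T (i - 1) j (k - 1) := by
        have h := ihZ ((n : ℤ) - r - t) (by omega) (by omega) (i - 1) j (k - 1)
          (by linear_combination hμ)
        rwa [show i - 1 + 2 = i + 2 - 1 from by ring] at h
      have hA3 : T (i + 2) (j - 2 + 1) (k - 1) = T i (j + 1) (k - 1) := by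
        have h := ihZ ((n : ℤ) + r - t) (by omega) (by omega) i (j + 1) (k - 1)
          (by linear_combination hμ)
        rwa [show j + 1 - 2 = j - 2 + 1 from by ring] at h
      have hA4 : T (i + 2) (j - 2 - 1) (k - 1) = T i (j - 1) (k - 1) := by
        have h := ihZ ((n : ℤ) - r - t) (by omega) (by omega) i (j - 1) (k - 1)
          (by linear_combination hμ)
        rwa [show j - 1 - 2 = j - 2 - 1 from by ring] at h
      have hA5 : T (i + 2) (j - 2) (k - 1 - 1) = T i j (k - 1 - 1) :=
        ihZ ((n : ℤ) - 2 * t) (by omega) (by omega) i j (k - 1 - 1)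
          (by linear_combination hμ)
      have h1 := hT i j (k - 1)
        (by rw [show r * i + r * j + t * (k - 1 + 1) = (n : ℤ) from by linear_combination hμ]
            exact hband)
      have h2 := hT (i + 2) (j - 2) (k - 1)
        (by rw [show r * (i + 2) + r * (j - 2) + t * (k - 1 + 1) = (n : ℤ) from by
              linear_combination hμ]
            exact hband)
      rw [hA1, hA2, hA3, hA4, hA5] at h2
      have hD : T i j (k - 1 - 1) ≠ 0 :=
        hT0 i j (k - 1 - 1)
          (by rw [show r * i + r * j + t * (k - 1 - 1) = (n : ℤ) - 2 * t from by
                linear_combination hμ]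
              omega)
      have h := mul_right_cancel₀ hD (h2.trans h1.symm)
      rwa [show k - 1 + 1 = k from by ring] at h

private lemma Tsystem_auxB
    (r t : ℤ) (hr0 : 0 ≤ r) (hrt : r < t)
    (T : ℤ → ℤ → ℤ → ℝ)
    (hT0 : ∀ i j k : ℤ, 0 ≤ r * i + r * j + t * k → T i j k ≠ 0)
    (hT : ∀ i j k : ℤ, 2 * t ≤ r * i + r * j + t * (k + 1) →
      T i j (k + 1) * T i j (k - 1)
        = T (i + 1) j k * T (i - 1) j k + T i (j + 1) k * T i (j - 1) k)
    (hper2 : ∀ i j k : ℤ, 0 ≤ r * i + r * j + t * k → r * i + r * j + t * k < 2 * t →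
      T (i + 2 * t) j (k - 2 * r) = T i j k) :
    ∀ n : ℕ, ∀ i j k : ℤ, r * i + r * j + t * k + 2 * r * t = (n : ℤ) →
      T (i + 2 * t) j k = T i j (k + 2 * r) := by
  intro n
  induction n using Nat.strong_induction_on with
  | _ n ih =>
    intro i j k hμ
    by_cases hband : (n : ℤ) < 2 * t
    · have h := hper2 i j (k + 2 * r)
        (by rw [show r * i + r * j + t * (k + 2 * r) = (n : ℤ) from by linear_combination hμ]
            exact Int.natCast_nonneg n)
        (by rw [show r * i + r * j + t * (k + 2 * r) = (n : ℤ) from by linear_combination hμ]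
            exact hband)
      rwa [show k + 2 * r - 2 * r = k from by ring] at h
    · push_neg at hband
      have ihZ : ∀ m : ℤ, 0 ≤ m → m < (n : ℤ) → ∀ a b c : ℤ,
          r * a + r * b + t * c + 2 * r * t = m → T (a + 2 * t) b c = T a b (c + 2 * r) := by
        intro m hm0 hmn a b c h
        exact ih m.toNat (by omega) a b c (by rw [Int.toNat_of_nonneg hm0]; exact h)
      have hB1 : T (i + 2 * t + 1) j (k - 1) = T (i + 1) j (k + 2 * r - 1) := by
        have h := ihZ ((n : ℤ) + r - t) (by omega) (by omega) (i + 1) j (k - 1)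
          (by linear_combination hμ)
        rwa [show i + 1 + 2 * t = i + 2 * t + 1 from by ring,
          show k - 1 + 2 * r = k + 2 * r - 1 from by ring] at h
      have hB2 : T (i + 2 * t - 1) j (k - 1) = T (i - 1) j (k + 2 * r - 1) := by
        have h := ihZ ((n : ℤ) - r - t) (by omega) (by omega) (i - 1) j (k - 1)
          (by linear_combination hμ)
        rwa [show i - 1 + 2 * t = i + 2 * t - 1 from by ring,
          show k - 1 + 2 * r = k + 2 * r - 1 from by ring] at h
      have hB3 : T (i + 2 * t) (j + 1) (k - 1) = T i (j + 1) (k + 2 * r - 1) := by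
        have h := ihZ ((n : ℤ) + r - t) (by omega) (by omega) i (j + 1) (k - 1)
          (by linear_combination hμ)
        rwa [show k - 1 + 2 * r = k + 2 * r - 1 from by ring] at h
      have hB4 : T (i + 2 * t) (j - 1) (k - 1) = T i (j - 1) (k + 2 * r - 1) := by
        have h := ihZ ((n : ℤ) - r - t) (by omega) (by omega) i (j - 1) (k - 1)
          (by linear_combination hμ)
        rwa [show k - 1 + 2 * r = k + 2 * r - 1 from by ring] at h
      have hB5 : T (i + 2 * t) j (k - 1 - 1) = T i j (k + 2 * r - 1 - 1) := by
        have h := ihZ ((n : ℤ) - 2 * t) (by omega) (by omega) i j (k - 1 - 1)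
          (by linear_combination hμ)
        rwa [show k - 1 - 1 + 2 * r = k + 2 * r - 1 - 1 from by ring] at h
      have h1 := hT (i + 2 * t) j (k - 1)
        (by rw [show r * (i + 2 * t) + r * j + t * (k - 1 + 1) = (n : ℤ) from by
              linear_combination hμ]
            exact hband)
      have h2 := hT i j (k + 2 * r - 1)
        (by rw [show r * i + r * j + t * (k + 2 * r - 1 + 1) = (n : ℤ) from by
              linear_combination hμ]
            exact hband)
      rw [hB1, hB2, hB3, hB4, hB5] at h1
      have hD : T i j (k + 2 * r - 1 - 1) ≠ 0 :=
        hT0 i j (k + 2 * r - 1 - 1)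
          (by rw [show r * i + r * j + t * (k + 2 * r - 1 - 1) = (n : ℤ) - 2 * t from by
                linear_combination hμ]
              omega)
      have h := mul_right_cancel₀ hD (h1.trans h2.symm)
      rwa [show k - 1 + 1 = k from by ring,
        show k + 2 * r - 1 + 1 = k + 2 * r from by ring] at h

/-- Lemma 4.1: periodicity of the solution of the (r,r,t)-slanted T-system
with 2×2-periodic initial data: if the initial data satisfy
`T(i+2,j−2,k) = T(i,j,k)` and `T(i+2t,j,k−2r) = T(i,j,k)` on the band, then for all points
with `μ ≥ 0`: `T(i+2,j−2,k) = T(i,j,k)` and `T(i+2t,j,k) = T(i,j,k+2r)`. -/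
theorem Tsystem_periodicity_2x2
    (r t : ℤ) (hr0 : 0 ≤ r) (hrt : r < t)
    (T : ℤ → ℤ → ℤ → ℝ)
    (hT0 : ∀ i j k : ℤ, 0 ≤ r * i + r * j + t * k → T i j k ≠ 0)
    (hT : ∀ i j k : ℤ, 2 * t ≤ r * i + r * j + t * (k + 1) →
      T i j (k + 1) * T i j (k - 1)
        = T (i + 1) j k * T (i - 1) j k + T i (j + 1) k * T i (j - 1) k)
    (hper1 : ∀ i j k : ℤ, 0 ≤ r * i + r * j + t * k → r * i + r * j + t * k < 2 * t →
      T (i + 2) (j - 2) k = T i j k)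
    (hper2 : ∀ i j k : ℤ, 0 ≤ r * i + r * j + t * k → r * i + r * j + t * k < 2 * t →
      T (i + 2 * t) j (k - 2 * r) = T i j k) :
    ∀ i j k : ℤ, 0 ≤ r * i + r * j + t * k →
      T (i + 2) (j - 2) k = T i j k ∧ T (i + 2 * t) j k = T i j (k + 2 * r) := by
  intro i j k h
  have h2rt : 0 ≤ 2 * r * t := by
    have ht : 0 < t := lt_of_le_of_lt hr0 hrt
    have : 0 ≤ 2 * r := by linarith
    exact mul_nonneg this ht.le
  constructor
  · exact Tsystem_auxA r t hr0 hrt T hT0 hT hper1 (r * i + r * j + t * k).toNat i j k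
      (Int.toNat_of_nonneg h).symm
  · exact Tsystem_auxB r t hr0 hrt T hT0 hT hper2 (r * i + r * j + t * k + 2 * r * t).toNat
      i j k (by rw [Int.toNat_of_nonneg (by linarith)])
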